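/- Let f : ℝⁿ → ℝ be convex and differentiable, h : ℝⁿ → ℝ convex, g : ℝⁿ → ℝ concave and differentiable, with g(x) > 0 and f(x) + h(x) ≥ 0 for all x. Define F(x) = (f(x) + h(x))/g(x). If x̄ satisfies 0 ∈ ∇f(x̄) + ∂h(x̄) − F(x̄)·∇g(x̄), then F(x̄) ≤ F(x) for all x, i.e., any critical point of the convex-concave fractional problem is a global minimum. -/

import Mathlib

open scoped RealInnerProductSpace

/-- Gradient inequality for convex functions: a differentiable convex function lies
above its tangent plane. -/
lemma convex_grad_ineq {n : ℕ} (f : EuclideanSpace ℝ (Fin n) → ℝ)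
    (hf : ConvexOn ℝ Set.univ f) {G x : EuclideanSpace ℝ (Fin n)}
    (hfd : HasGradientAt f G x) (y : EuclideanSpace ℝ (Fin n)) :
    f x + ⟪G, y - x⟫ ≤ f y := by
  set c : ℝ → EuclideanSpace ℝ (Fin n) := fun t => x + t • (y - x) with hc
  have hc0 : c 0 = x := by simp [hc]
  have hcd : HasDerivAt c (y - x) 0 := by
    rw [hc]; simpa using ((hasDerivAt_id (0:ℝ)).smul_const (y - x)).const_add x
  have hφ : HasDerivAt (f ∘ c) ⟪G, y - x⟫ 0 := by
    have h1 := hasGradientAt_iff_hasFDerivAt.mp hfd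
    rw [← hc0] at h1
    simpa using h1.comp_hasDerivAt 0 hcd
  have hslope : Filter.Tendsto (slope (f ∘ c) 0) (nhdsWithin 0 (Set.Ioi 0))
      (nhds ⟪G, y - x⟫) := by
    have := hasDerivAt_iff_tendsto_slope.mp hφ
    exact this.mono_left (nhdsWithin_mono 0 (fun t ht => ne_of_gt ht))
  have hbound : ∀ᶠ t in nhdsWithin (0:ℝ) (Set.Ioi 0), slope (f ∘ c) 0 t ≤ f y - f x := by
    filter_upwards [Ioc_mem_nhdsGT_of_mem (Set.left_mem_Ico.mpr one_pos)] with t ht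
    have ht0 : (0:ℝ) < t := ht.1
    have hct : c t = (1 - t) • x + t • y := by
      simp only [hc, smul_sub, sub_smul, one_smul]; abel
    have h1 : f (c t) ≤ (1 - t) * f x + t * f y := by
      rw [hct]
      exact hf.2 (Set.mem_univ x) (Set.mem_univ y) (by linarith [ht.2]) ht0.le (by ring)
    rw [slope_def_field]
    simp only [Function.comp_apply, hc0, sub_zero]
    rw [div_le_iff₀ ht0]
    nlinarith [h1]
  have := le_of_tendsto hslope hbound
  linarith [this]

theorem critical_point_is_global_min {n : ℕ}
    (f h g : EuclideanSpace ℝ (Fin n) → ℝ)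
    (f' g' : EuclideanSpace ℝ (Fin n) → EuclideanSpace ℝ (Fin n))
    (hf : ConvexOn ℝ Set.univ f) (hfd : ∀ x, HasGradientAt f (f' x) x)
    (hh : ConvexOn ℝ Set.univ h)
    (hg : ConcaveOn ℝ Set.univ g) (hgd : ∀ x, HasGradientAt g (g' x) x)
    (hgpos : ∀ x, 0 < g x) (hnum : ∀ x, 0 ≤ f x + h x)
    (xb v : EuclideanSpace ℝ (Fin n))
    (hv : ∀ z, h xb + ⟪v, z - xb⟫ ≤ h z)
    (hcrit : f' xb + v - ((f xb + h xb) / g xb) • g' xb = 0) :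
    ∀ x, (f xb + h xb) / g xb ≤ (f x + h x) / g x := by
  intro x
  set F := (f xb + h xb) / g xb with hF
  have hFnn : 0 ≤ F := div_nonneg (hnum xb) (hgpos xb).le
  have h1 : f xb + ⟪f' xb, x - xb⟫ ≤ f x := convex_grad_ineq f hf (hfd xb) x
  have h2 : h xb + ⟪v, x - xb⟫ ≤ h x := hv x
  have hneg : HasGradientAt (fun z => -g z) (-(g' xb)) xb := by
    rw [hasGradientAt_iff_hasFDerivAt, map_neg]
    exact (hasGradientAt_iff_hasFDerivAt.mp (hgd xb)).neg
  have h3 : g x ≤ g xb + ⟪g' xb, x - xb⟫ := by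
    have := convex_grad_ineq (fun z => -g z) hg.neg hneg x
    simp only [inner_neg_left] at this
    linarith [this]
  have hveq : v = F • g' xb - f' xb := by
    linear_combination (norm := module) hcrit
  have hinner : ⟪f' xb, x - xb⟫ + ⟪v, x - xb⟫ = F * ⟪g' xb, x - xb⟫ := by
    rw [hveq]
    simp [inner_sub_left, inner_smul_left]
  have h6 : F * g xb = f xb + h xb := by
    rw [hF]; exact div_mul_cancel₀ _ (hgpos xb).ne'
  have key : F * g x ≤ f x + h x := by
    nlinarith [mul_le_mul_of_nonneg_left h3 hFnn]
  rw [le_div_iff₀ (hgpos x)]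
  exact key
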